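/- Let K ≥ 0, L ≥ 0, and let f: (0, ∞) → [0, ∞) be a measurable function with f(s) ≤ K s for all s > 0 and lim_{s→0⁺} f(s)/(2s) = L. Let (δ_ε)_{ε>0} be positive real numbers such that δ_ε/ε → ℓ ∈ [0, ∞) as ε → 0⁺. Then lim_{ε→0⁺} [ (1/(2ε²)) ∫_{δ_ε}^∞ e^{−(s−δ_ε)/ε} f(s) ds − f(δ_ε)/(4ε) ] = (1 + ℓ/2) L. -/

import Mathlib

open MeasureTheory Filter Set Topology

lemma aux_deriv (a c : ℝ) (hc : 0 < c) (x : ℝ) :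
    HasDerivAt (fun s => -c * Real.exp (-(s - a)/c) * (s + c))
      (Real.exp (-(x - a)/c) * x) x := by
  have h1 : HasDerivAt (fun s : ℝ => -(s - a)/c) (-1/c) x := by
    simpa using (((hasDerivAt_id x).sub_const a).neg.div_const c)
  have h2 := h1.exp
  have h3 : HasDerivAt (fun s : ℝ => s + c) 1 x := (hasDerivAt_id x).add_const c
  have h4 := (h2.mul h3).const_mul (-c)
  have heq : (fun s => -c * Real.exp (-(s - a)/c) * (s + c))
      = fun y => -c * (Real.exp (-(y - a)/c) * (y + c)) := by funext y; ring
  rw [heq]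
  refine h4.congr_deriv ?_
  have hc' : c ≠ 0 := hc.ne'
  field_simp
  ring

lemma aux_tendsto (a c : ℝ) (hc : 0 < c) :
    Tendsto (fun s => -c * Real.exp (-(s - a)/c) * (s + c)) atTop (𝓝 0) := by
  have h1 : Tendsto (fun s : ℝ => (s - a)/c) atTop atTop :=
    (tendsto_atTop_add_const_right _ (-a) tendsto_id).atTop_div_const hc
  have h2 : Tendsto (fun t : ℝ => Real.exp (-t) * (c * t + (a + c))) atTop (𝓝 0) := by
    have hA := Real.tendsto_pow_mul_exp_neg_atTop_nhds_zero 1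
    have hB := Real.tendsto_exp_neg_atTop_nhds_zero
    have h := ((hA.const_mul c).add (hB.const_mul (a + c)))
    have h' : Tendsto (fun x : ℝ => c * (x * Real.exp (-x)) + (a + c) * Real.exp (-x))
        atTop (𝓝 0) := by simpa using h
    exact h'.congr fun t => by ring
  have h3 := h2.comp h1
  have h4 : Tendsto (fun s : ℝ => Real.exp (-(s - a)/c) * (s + c)) atTop (𝓝 0) := by
    refine h3.congr fun s => ?_
    have hc' : c ≠ 0 := hc.ne'
    simp only [Function.comp]
    rw [neg_div]
    congr 1
    field_simp
    ring
  simpa using (h4.const_mul (-c)).congr fun s => by ring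

lemma aux_intOn (a c : ℝ) (ha : 0 ≤ a) (hc : 0 < c) :
    IntegrableOn (fun s => Real.exp (-(s - a)/c) * s) (Ioi a) := by
  refine integrableOn_Ioi_deriv_of_nonneg' (fun x _ => aux_deriv a c hc x)
    (fun x hx => ?_) (aux_tendsto a c hc)
  exact mul_nonneg (Real.exp_nonneg _) (ha.trans hx.out.le)

lemma aux_int (a c : ℝ) (ha : 0 ≤ a) (hc : 0 < c) :
    ∫ s in Ioi a, Real.exp (-(s - a)/c) * s = c*a + c^2 := by
  rw [integral_Ioi_of_hasDerivAt_of_nonneg' (fun x _ => aux_deriv a c hc x)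
    (fun x hx => mul_nonneg (Real.exp_nonneg _) (ha.trans hx.out.le)) (aux_tendsto a c hc)]
  simp only [sub_self, neg_zero, zero_div, Real.exp_zero]
  ring

lemma aux_intf {K : ℝ} (f : ℝ → ℝ) (hfmeas : Measurable f) (hf0 : ∀ s : ℝ, 0 < s → 0 ≤ f s)
    (hfK : ∀ s : ℝ, 0 < s → f s ≤ K * s) (a c : ℝ) (ha : 0 < a) (hc : 0 < c) :
    IntegrableOn (fun s => Real.exp (-(s - a)/c) * f s) (Ioi a) := by
  have hb := (aux_intOn a c ha.le hc).const_mul K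
  refine Integrable.mono' hb ?_ ?_
  · exact ((Real.measurable_exp.comp
      (((measurable_id.sub_const a).neg).div_const c)).mul hfmeas).aestronglyMeasurable
  · rw [ae_restrict_iff' measurableSet_Ioi]
    filter_upwards with s hs
    have hs0 : 0 < s := ha.trans hs
    rw [Real.norm_eq_abs, abs_of_nonneg (mul_nonneg (Real.exp_nonneg _) (hf0 s hs0))]
    calc Real.exp (-(s - a)/c) * f s
        ≤ Real.exp (-(s - a)/c) * (K * s) :=
          mul_le_mul_of_nonneg_left (hfK s hs0) (Real.exp_nonneg _)
      _ = K * (Real.exp (-(s - a)/c) * s) := by ring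

lemma aux_delta0 (δ : ℝ → ℝ) (hδ : ∀ ε : ℝ, 0 < ε → 0 < δ ε) (ℓ : ℝ)
    (hδℓ : Tendsto (fun ε => δ ε / ε) (nhdsWithin 0 (Set.Ioi 0)) (nhds ℓ)) :
    Tendsto δ (nhdsWithin 0 (Set.Ioi 0)) (nhdsWithin 0 (Set.Ioi 0)) := by
  rw [tendsto_nhdsWithin_iff]
  constructor
  · have hid : Tendsto (fun ε : ℝ => ε) (𝓝[>] (0:ℝ)) (𝓝 0) :=
      tendsto_id.mono_left nhdsWithin_le_nhds
    have h := hδℓ.mul hid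
    rw [mul_zero] at h
    refine h.congr' ?_
    filter_upwards [self_mem_nhdsWithin] with ε hε
    exact div_mul_cancel₀ _ (ne_of_gt hε)
  · filter_upwards [self_mem_nhdsWithin] with ε hε
    exact hδ ε hε

lemma aux_exp_tail (r : ℝ) (hr : 0 < r) :
    Tendsto (fun ε : ℝ => Real.exp (-(r/2)/(2*ε))) (𝓝[>] (0:ℝ)) (𝓝 0) := by
  have h1 : Tendsto (fun ε : ℝ => (r/4) * ε⁻¹) (𝓝[>] (0:ℝ)) atTop :=
    (tendsto_inv_nhdsGT_zero).const_mul_atTop (by positivity)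
  have h2 : Tendsto (fun ε : ℝ => -((r/4) * ε⁻¹)) (𝓝[>] (0:ℝ)) atBot :=
    tendsto_neg_atBot_iff.mpr h1
  have h3 := Real.tendsto_exp_atBot.comp h2
  refine h3.congr fun ε => ?_
  simp only [Function.comp]
  congr 1
  simp only [div_eq_mul_inv, mul_inv, neg_mul]
  ring

set_option maxHeartbeats 1000000 in
lemma aux_T1 (K L : ℝ) (hK : 0 ≤ K) (hL : 0 ≤ L)
    (f : ℝ → ℝ) (hfmeas : Measurable f)
    (hf0 : ∀ s : ℝ, 0 < s → 0 ≤ f s) (hfK : ∀ s : ℝ, 0 < s → f s ≤ K * s)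
    (hfL : Tendsto (fun s => f s / (2 * s)) (nhdsWithin 0 (Set.Ioi 0)) (nhds L))
    (δ : ℝ → ℝ) (hδ : ∀ ε : ℝ, 0 < ε → 0 < δ ε)
    (ℓ : ℝ) (hℓ : 0 ≤ ℓ)
    (hδℓ : Tendsto (fun ε => δ ε / ε) (nhdsWithin 0 (Set.Ioi 0)) (nhds ℓ)) :
    Tendsto (fun ε => 1 / (2 * ε ^ 2) *
      ∫ s in Set.Ioi (δ ε), Real.exp (-(s - δ ε) / ε) * (f s - 2*L*s))
      (nhdsWithin 0 (Set.Ioi 0)) (nhds 0) := by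
  obtain ⟨C, hC⟩ : ∃ x : ℝ, x = K + 2*L := ⟨_, rfl⟩
  have hC0 : 0 ≤ C := by rw [hC]; positivity
  rw [NormedAddCommGroup.tendsto_nhds_zero]
  intro η hη
  have hℓ2 : (0:ℝ) < ℓ + 2 := by linarith
  obtain ⟨η', hη'def⟩ : ∃ x : ℝ, x = η / (4*(ℓ+2)) := ⟨_, rfl⟩
  have hη' : 0 < η' := by rw [hη'def]; positivity
  -- get r from hfL
  rw [Metric.tendsto_nhdsWithin_nhds] at hfL
  obtain ⟨r, hr, hball⟩ := hfL η' hη'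
  -- error bounds
  have herr : ∀ s : ℝ, 0 < s → s < r → |f s - 2*L*s| ≤ 2*η'*s := by
    intro s hs hsr
    have hb := hball (x := s) hs (by simpa [Real.dist_eq, abs_of_pos hs] using hsr)
    rw [Real.dist_eq] at hb
    have key : f s - 2*L*s = (2*s) * (f s / (2*s) - L) := by field_simp
    rw [key, abs_mul, abs_of_pos (by linarith : (0:ℝ) < 2*s)]
    nlinarith [abs_nonneg (f s / (2*s) - L)]
  have herrC : ∀ s : ℝ, 0 < s → |f s - 2*L*s| ≤ C*s := by
    intro s hs
    rw [abs_le]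
    rw [hC]
    constructor
    · nlinarith [hf0 s hs]
    · nlinarith [hfK s hs]
  -- eventual facts
  have hδ0 := aux_delta0 δ hδ ℓ hδℓ
  have ev1 : ∀ᶠ ε in 𝓝[>] (0:ℝ), δ ε < r/2 :=
    (hδ0.mono_right nhdsWithin_le_nhds).eventually_lt_const (by linarith)
  have ev2 : ∀ᶠ ε in 𝓝[>] (0:ℝ), δ ε / ε < ℓ + 1 :=
    hδℓ.eventually_lt_const (by linarith)
  have ev3 : ∀ᶠ ε in 𝓝[>] (0:ℝ), C * Real.exp (-(r/2)/(2*ε)) * (ℓ+3) < η/2 := by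
    have h := ((aux_exp_tail r hr).const_mul C).mul_const (ℓ+3)
    rw [mul_zero, zero_mul] at h
    exact h.eventually_lt_const (by linarith)
  filter_upwards [self_mem_nhdsWithin, ev1, ev2, ev3] with ε hε hδr hδε htail
  have hε0 : (0:ℝ) < ε := hε
  set a := δ ε with ha_def
  have ha : 0 < a := hδ ε hε0
  have har : a < r := by linarith
  obtain ⟨q, hq_def⟩ : ∃ x : ℝ, x = Real.exp (-(r - a)/(2*ε)) := ⟨_, rfl⟩
  have hq0 : 0 < q := hq_def ▸ Real.exp_pos _
  -- pointwise bound
  have hptwise : ∀ s ∈ Ioi a,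
      |Real.exp (-(s - a)/ε) * (f s - 2*L*s)| ≤
        2*η' * (Real.exp (-(s - a)/ε) * s) + C*q * (Real.exp (-(s - a)/(2*ε)) * s) := by
    intro s hs
    have hsa : a < s := hs
    have hs0 : 0 < s := ha.trans hsa
    rw [abs_mul, abs_of_nonneg (Real.exp_nonneg _)]
    rcases lt_or_ge s r with hsr | hsr
    · have h1 : Real.exp (-(s - a)/ε) * |f s - 2*L*s| ≤
          Real.exp (-(s - a)/ε) * (2*η'*s) :=
        mul_le_mul_of_nonneg_left (herr s hs0 hsr) (Real.exp_nonneg _)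
      have h2 : 0 ≤ C*q * (Real.exp (-(s - a)/(2*ε)) * s) := by positivity
      nlinarith [h1]
    · have hsplit : Real.exp (-(s - a)/ε)
          = Real.exp (-(s - a)/(2*ε)) * Real.exp (-(s - a)/(2*ε)) := by
        rw [← Real.exp_add]
        congr 1
        field_simp
        ring
      have hmono : Real.exp (-(s - a)/(2*ε)) ≤ q := by
        rw [hq_def]
        apply Real.exp_le_exp.mpr
        apply div_le_div_of_nonneg_right ?_ (by positivity)
        · linarith
      have h1 : Real.exp (-(s - a)/ε) * |f s - 2*L*s|
          ≤ (q * Real.exp (-(s - a)/(2*ε))) * (C*s) := by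
        rw [hsplit]
        have he2 : 0 ≤ Real.exp (-(s - a)/(2*ε)) := Real.exp_nonneg _
        have hCs : 0 ≤ C*s := mul_nonneg hC0 hs0.le
        calc Real.exp (-(s - a)/(2*ε)) * Real.exp (-(s - a)/(2*ε)) * |f s - 2*L*s|
            ≤ Real.exp (-(s - a)/(2*ε)) * Real.exp (-(s - a)/(2*ε)) * (C*s) :=
              mul_le_mul_of_nonneg_left (herrC s hs0) (by positivity)
          _ ≤ (q * Real.exp (-(s - a)/(2*ε))) * (C*s) :=
              mul_le_mul_of_nonneg_right (mul_le_mul_of_nonneg_right hmono he2) hCs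
      have h2 : 0 ≤ 2*η' * (Real.exp (-(s - a)/ε) * s) := by positivity
      nlinarith [h1]
  -- integrabilities
  have I1 : IntegrableOn (fun s => Real.exp (-(s - a)/ε) * s) (Ioi a) :=
    aux_intOn a ε ha.le hε0
  have I2 : IntegrableOn (fun s => Real.exp (-(s - a)/(2*ε)) * s) (Ioi a) :=
    aux_intOn a (2*ε) ha.le (by positivity)
  have If : IntegrableOn (fun s => Real.exp (-(s - a)/ε) * f s) (Ioi a) :=
    aux_intf f hfmeas hf0 hfK a ε ha hε0
  have Ierr : IntegrableOn (fun s => Real.exp (-(s - a)/ε) * (f s - 2*L*s)) (Ioi a) := by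
    have : (fun s => Real.exp (-(s - a)/ε) * (f s - 2*L*s))
        = fun s => Real.exp (-(s - a)/ε) * f s - (2*L) * (Real.exp (-(s - a)/ε) * s) := by
      funext s; ring
    rw [this]
    exact If.sub (I1.const_mul (2*L))
  have Ibound : IntegrableOn (fun s => 2*η' * (Real.exp (-(s - a)/ε) * s)
      + C*q * (Real.exp (-(s - a)/(2*ε)) * s)) (Ioi a) :=
    (I1.const_mul (2*η')).add (I2.const_mul (C*q))
  -- the chain
  have hstep1 : ‖1 / (2 * ε ^ 2) *
      ∫ s in Set.Ioi a, Real.exp (-(s - a) / ε) * (f s - 2*L*s)‖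
      ≤ 1 / (2 * ε ^ 2) *
      ∫ s in Set.Ioi a, |Real.exp (-(s - a) / ε) * (f s - 2*L*s)| := by
    rw [Real.norm_eq_abs, abs_mul, abs_of_pos (by positivity : (0:ℝ) < 1 / (2 * ε ^ 2))]
    apply mul_le_mul_of_nonneg_left _ (by positivity)
    have h := norm_integral_le_integral_norm (μ := volume.restrict (Ioi a))
      (f := fun s => Real.exp (-(s - a) / ε) * (f s - 2*L*s))
    simpa only [Real.norm_eq_abs] using h
  have hstep2 : (∫ s in Set.Ioi a, |Real.exp (-(s - a) / ε) * (f s - 2*L*s)|)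
      ≤ ∫ s in Set.Ioi a, (2*η' * (Real.exp (-(s - a)/ε) * s)
        + C*q * (Real.exp (-(s - a)/(2*ε)) * s)) :=
    setIntegral_mono_on Ierr.abs Ibound measurableSet_Ioi hptwise
  have hstep3 : (∫ s in Set.Ioi a, (2*η' * (Real.exp (-(s - a)/ε) * s)
        + C*q * (Real.exp (-(s - a)/(2*ε)) * s)))
      = 2*η' * (ε*a + ε^2) + C*q * ((2*ε)*a + (2*ε)^2) := by
    rw [integral_add (I1.const_mul (2*η')) (I2.const_mul (C*q)),
      integral_const_mul, integral_const_mul, aux_int a ε ha.le hε0,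
      aux_int a (2*ε) ha.le (by positivity)]
  have heq : ∀ x y : ℝ, 1 / (2 * ε ^ 2) * (2*x * (ε*a + ε^2) + y * ((2*ε)*a + (2*ε)^2))
      = x * (a/ε + 1) + y * (a/ε + 2) := by
    intro x y
    field_simp
  have hfin1 : η' * (a/ε + 1) ≤ η/4 := by
    have h1 : a/ε + 1 ≤ ℓ + 2 := by linarith
    have := mul_le_mul_of_nonneg_left h1 hη'.le
    have heq2 : η' * (ℓ + 2) = η/4 := by
      rw [hη'def]; field_simp
    linarith
  have hfin2 : C*q * (a/ε + 2) < η/2 + 0 := by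
    have hqe : q ≤ Real.exp (-(r/2)/(2*ε)) := by
      rw [hq_def]
      apply Real.exp_le_exp.mpr
      apply div_le_div_of_nonneg_right ?_ (by positivity)
      · linarith
    have hda : 0 ≤ a/ε := by positivity
    have h1 : a/ε + 2 ≤ ℓ + 3 := by
      have : a/ε < ℓ + 1 := hδε
      linarith
    have h2 : C*q * (a/ε + 2) ≤ C * Real.exp (-(r/2)/(2*ε)) * (ℓ+3) := by
      apply mul_le_mul (mul_le_mul_of_nonneg_left hqe hC0) h1 (by linarith)
        (mul_nonneg hC0 (Real.exp_nonneg _))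
    linarith
  calc ‖1 / (2 * ε ^ 2) * ∫ s in Set.Ioi a, Real.exp (-(s - a) / ε) * (f s - 2*L*s)‖
      ≤ 1 / (2 * ε ^ 2) * ∫ s in Set.Ioi a,
        |Real.exp (-(s - a) / ε) * (f s - 2*L*s)| := hstep1
    _ ≤ 1 / (2 * ε ^ 2) * (2*η' * (ε*a + ε^2) + C*q * ((2*ε)*a + (2*ε)^2)) := by
        rw [← hstep3]
        exact mul_le_mul_of_nonneg_left hstep2 (by positivity)
    _ = η' * (a/ε + 1) + C*q * (a/ε + 2) := heq η' (C*q)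
    _ < η := by linarith

/-- Let `f : (0,∞) → [0,∞)` be measurable with `f(s) ≤ K s` and
`f(s)/(2s) → L` as `s → 0⁺`, and let `δ_ε > 0` with `δ_ε/ε → ℓ ≥ 0` as `ε → 0⁺`. Then
`(1/(2ε²)) ∫_{δ_ε}^∞ e^{−(s−δ_ε)/ε} f(s) ds − f(δ_ε)/(4ε) → (1 + ℓ/2) L` as `ε → 0⁺`. -/
theorem stmt_15 (K L : ℝ) (hK : 0 ≤ K) (hL : 0 ≤ L)
    (f : ℝ → ℝ) (hfmeas : Measurable f)
    (hf0 : ∀ s : ℝ, 0 < s → 0 ≤ f s) (hfK : ∀ s : ℝ, 0 < s → f s ≤ K * s)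
    (hfL : Tendsto (fun s => f s / (2 * s)) (nhdsWithin 0 (Set.Ioi 0)) (nhds L))
    (δ : ℝ → ℝ) (hδ : ∀ ε : ℝ, 0 < ε → 0 < δ ε)
    (ℓ : ℝ) (hℓ : 0 ≤ ℓ)
    (hδℓ : Tendsto (fun ε => δ ε / ε) (nhdsWithin 0 (Set.Ioi 0)) (nhds ℓ)) :
    Tendsto
      (fun ε =>
        1 / (2 * ε ^ 2) * (∫ s in Set.Ioi (δ ε), Real.exp (-(s - δ ε) / ε) * f s) -
          f (δ ε) / (4 * ε))
      (nhdsWithin 0 (Set.Ioi 0)) (nhds ((1 + ℓ / 2) * L)) := by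
  have hδ0 := aux_delta0 δ hδ ℓ hδℓ
  have hT1 := aux_T1 K L hK hL f hfmeas hf0 hfK hfL δ hδ ℓ hℓ hδℓ
  have hT2 : Tendsto (fun ε => L * (δ ε / ε + 1)) (𝓝[>] (0:ℝ)) (𝓝 (L * (ℓ + 1))) :=
    (hδℓ.add_const 1).const_mul L
  have hT3 : Tendsto (fun ε => δ ε / (2*ε) * (f (δ ε) / (2 * δ ε)))
      (𝓝[>] (0:ℝ)) (𝓝 (ℓ/2 * L)) := by
    have hA : Tendsto (fun ε => δ ε / (2*ε)) (𝓝[>] (0:ℝ)) (𝓝 (ℓ/2)) := by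
      refine (hδℓ.div_const 2).congr fun ε => ?_
      rw [div_div, mul_comm]
    exact hA.mul (hfL.comp hδ0)
  have hsum := (hT1.add hT2).sub hT3
  rw [zero_add] at hsum
  have hval : L * (ℓ+1) - ℓ/2 * L = (1 + ℓ/2) * L := by ring
  rw [hval] at hsum
  refine hsum.congr' ?_
  filter_upwards [self_mem_nhdsWithin] with ε hε
  have hε0 : (0:ℝ) < ε := hε
  have ha : 0 < δ ε := hδ ε hε0
  have hint : ∫ s in Set.Ioi (δ ε), Real.exp (-(s - δ ε)/ε) * f s
      = (∫ s in Set.Ioi (δ ε), Real.exp (-(s - δ ε)/ε) * (f s - 2*L*s))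
        + 2*L*(ε*(δ ε) + ε^2) := by
    have I1 := aux_intOn (δ ε) ε ha.le hε0
    have If := aux_intf f hfmeas hf0 hfK (δ ε) ε ha hε0
    have hfun : (fun s => Real.exp (-(s - δ ε)/ε) * (f s - 2*L*s))
        = fun s => Real.exp (-(s - δ ε)/ε) * f s
          - (2*L) * (Real.exp (-(s - δ ε)/ε) * s) := by
      funext s; ring
    rw [hfun, integral_sub If (I1.const_mul (2*L)), integral_const_mul,
      aux_int (δ ε) ε ha.le hε0]
    ring
  rw [hint]
  generalize (∫ s in Set.Ioi (δ ε), Real.exp (-(s - δ ε)/ε) * (f s - 2*L*s)) = I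
  have hδne : δ ε ≠ 0 := ha.ne'
  have hεne : ε ≠ 0 := hε0.ne'
  field_simp
  ring
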